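/- Let s > 0, let f : ℝ → ℝ be defined by f(x) = Σ_{j=3}^∞ 2^{−js} cos((11/8)·2^j·x), and for n ≥ 3 set t_n = 8π/(11·2^n). Then for every real p with 1 ≤ p < ∞ and every n ≥ 3: 2^{ns} · ( ∫₀^{2π} |f(x − t_n) − f(x)|^p dx )^{1/p} ≥ (2π)^{1/p}; and also 2^{ns} · sup_{x ∈ ℝ} |f(x − t_n) − f(x)| ≥ 1. In particular, since t_n → 0⁺ as n → ∞, the weighted differences 2^{ns}‖f(·−t_n) − f‖_{L^p} do not tend to 0. -/

import Mathlib

open Real Filter MeasureTheory intervalIntegral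

noncomputable def aa (s : ℝ) (j : ℕ) : ℝ := (2 : ℝ) ^ (-(((j : ℝ) + 3)) * s)

lemma aa_pos (s : ℝ) (j : ℕ) : 0 < aa s j := Real.rpow_pos_of_pos (by norm_num) _

lemma aa_eq (s : ℝ) (j : ℕ) : aa s j = ((2:ℝ)^(-s)) ^ (j + 3) := by
  rw [aa, show (-(((j:ℝ)+3))*s) = (-s) * ((j+3 : ℕ) : ℝ) by push_cast; ring,
    Real.rpow_mul (by norm_num), Real.rpow_natCast]

lemma aa_summable (s : ℝ) (hs : 0 < s) : Summable (aa s) := by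
  have hr0 : (0:ℝ) ≤ (2:ℝ)^(-s) := (Real.rpow_pos_of_pos (by norm_num) _).le
  have hr1 : (2:ℝ)^(-s) < 1 :=
    Real.rpow_lt_one_of_one_lt_of_neg (by norm_num) (by linarith)
  have h := (summable_geometric_of_lt_one hr0 hr1).mul_left (((2:ℝ)^(-s))^3)
  refine h.congr fun j => ?_
  rw [aa_eq, pow_add, mul_comm]

lemma cos_integral_zero {k : ℤ} (hk : k ≠ 0) (φ : ℝ) :
    ∫ x in (0:ℝ)..(2*π), Real.cos (k * x + φ) = 0 := by
  have hd : ∀ x ∈ Set.uIcc (0:ℝ) (2*π),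
      HasDerivAt (fun y => Real.sin ((k:ℝ)*y+φ) / k) (Real.cos ((k:ℝ)*x+φ)) x := by
    intro x _
    have h1 : HasDerivAt (fun y : ℝ => (k:ℝ)*y+φ) (k:ℝ) x := by
      simpa using ((hasDerivAt_id x).const_mul (k:ℝ)).add_const φ
    have h2 := ((Real.hasDerivAt_sin ((k:ℝ)*x+φ)).comp x h1).div_const (k:ℝ)
    have hk' : (k:ℝ) ≠ 0 := Int.cast_ne_zero.mpr hk
    simpa [mul_div_assoc, mul_div_cancel_right₀ _ hk'] using h2
  have hc : IntervalIntegrable (fun x => Real.cos ((k:ℝ)*x+φ)) volume 0 (2*π) :=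
    (Continuous.intervalIntegrable (by fun_prop) _ _)
  rw [intervalIntegral.integral_eq_sub_of_hasDerivAt hd hc]
  have : (k:ℝ) * (2*π) + φ = φ + (k:ℤ) * (2*π) := by ring
  rw [this, Real.sin_add_int_mul_two_pi]
  simp

lemma cos_integral_zero' {a : ℝ} (ha : ∃ k : ℤ, k ≠ 0 ∧ (k:ℝ) = a) (φ : ℝ) :
    ∫ x in (0:ℝ)..(2*π), Real.cos (a * x + φ) = 0 := by
  obtain ⟨k, hk, rfl⟩ := ha
  exact cos_integral_zero hk φ

lemma cos_prod (m N : ℕ) (hm : 0 < m) (hN : 0 < N) (φ : ℝ) :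
    ∫ x in (0:ℝ)..(2*π), Real.cos (m*x+φ) * Real.cos (N*x)
      = if m = N then π * Real.cos φ else 0 := by
  have hpt : ∀ x : ℝ, Real.cos (m*x+φ) * Real.cos (N*x)
      = (Real.cos (((m:ℝ)+N)*x+φ) + Real.cos (((m:ℝ)-N)*x+φ)) / 2 := by
    intro x
    have e1 : ((((m:ℝ)+N)*x+φ) + (((m:ℝ)-N)*x+φ))/2 = (m:ℝ)*x+φ := by ring
    have e2 : ((((m:ℝ)+N)*x+φ) - (((m:ℝ)-N)*x+φ))/2 = (N:ℝ)*x := by ring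
    rw [Real.cos_add_cos, e1, e2]; ring
  rw [intervalIntegral.integral_congr (fun x _ => hpt x)]
  have h1 : IntervalIntegrable (fun x => Real.cos (((m:ℝ)+N)*x+φ)) volume 0 (2*π) :=
    Continuous.intervalIntegrable (by fun_prop) _ _
  have h2 : IntervalIntegrable (fun x => Real.cos (((m:ℝ)-N)*x+φ)) volume 0 (2*π) :=
    Continuous.intervalIntegrable (by fun_prop) _ _
  rw [intervalIntegral.integral_div, intervalIntegral.integral_add h1 h2]
  rw [cos_integral_zero' ⟨(m:ℤ)+N, by positivity, by push_cast; ring⟩ φ]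
  by_cases h : m = N
  · subst h
    have e3 : ((m:ℝ) - m) = 0 := by ring
    rw [e3, if_pos rfl]
    simp only [zero_mul, zero_add]
    rw [intervalIntegral.integral_const]
    simp
    ring
  · rw [cos_integral_zero' ⟨(m:ℤ)-N, by
      simpa [sub_eq_zero] using fun hmn => h (by exact_mod_cast hmn), by push_cast; ring⟩ φ]
    simp [h]

lemma holder_simple (g : ℝ → ℝ) (hg : Continuous g) (C : ℝ) (hC : ∀ x, |g x| ≤ C)
    (p : ℝ) (hp : 1 ≤ p) :
    ∫ x in (0:ℝ)..(2*π), |g x|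
      ≤ (∫ x in (0:ℝ)..(2*π), |g x| ^ p) ^ (1/p) * (2*π) ^ (1 - 1/p) := by
  have h2π : (0:ℝ) < 2*π := by linarith [Real.pi_pos]
  rcases eq_or_lt_of_le hp with hp1 | hp1
  · rw [← hp1]
    simp only [Real.rpow_one, one_div_one, sub_self, Real.rpow_zero, mul_one]
    exact le_of_eq (by simp [Real.rpow_one])
  · set μ : Measure ℝ := volume.restrict (Set.Ioc (0:ℝ) (2*π)) with hμ
    haveI : IsFiniteMeasure μ := ⟨by
      rw [hμ, Measure.restrict_apply_univ]; exact measure_Ioc_lt_top⟩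
    have hμuniv : (μ Set.univ).toReal = 2*π := by
      rw [hμ, Measure.restrict_apply_univ, Real.volume_Ioc]
      rw [ENNReal.toReal_ofReal (by linarith)]
      ring
    have hpq : p.HolderConjugate (Real.conjExponent p) :=
      Real.HolderConjugate.conjExponent hp1
    set q := Real.conjExponent p with hq
    have hmem1 : MemLp (fun x => |g x|) (ENNReal.ofReal p) μ :=
      MemLp.of_bound (hg.abs.aestronglyMeasurable) C
        (Eventually.of_forall fun x => by rw [Real.norm_eq_abs, abs_abs]; exact hC x)
    have hmem2 : MemLp (fun _ : ℝ => (1:ℝ)) (ENNReal.ofReal q) μ := memLp_const 1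
    have H := integral_mul_le_Lp_mul_Lq_of_nonneg (μ := μ) hpq
      (Eventually.of_forall fun x => abs_nonneg (g x))
      (Eventually.of_forall fun _ => zero_le_one) hmem1 hmem2
    simp only [mul_one, Real.one_rpow] at H
    rw [MeasureTheory.integral_const, smul_eq_mul, mul_one, measureReal_def, hμuniv] at H
    have hIoc1 : ∫ x in (0:ℝ)..(2*π), |g x| = ∫ x, |g x| ∂μ := by
      rw [intervalIntegral.integral_of_le (by linarith), hμ]
    have hIocp : ∫ x in (0:ℝ)..(2*π), |g x| ^ p = ∫ x, |g x| ^ p ∂μ := by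
      rw [intervalIntegral.integral_of_le (by linarith), hμ]
    rw [hIoc1, hIocp]
    have hq' : 1/q = 1 - 1/p := by
      have h := hpq.inv_add_inv_eq_one
      rw [one_div, one_div]
      linarith
    rw [← hq']
    exact H

theorem key (s : ℝ) (hs : 0 < s) (f : ℝ → ℝ)
    (hf : ∀ x : ℝ, f x = ∑' j : ℕ,
      (2 : ℝ) ^ (-(((j : ℝ) + 3)) * s) * Real.cos ((11 / 8) * 2 ^ (j + 3) * x))
    (t : ℕ → ℝ) (ht : ∀ n, t n = 8 * π / (11 * 2 ^ n)) (n : ℕ) (hn : 3 ≤ n) :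
    Continuous f ∧
    (∀ x, |f (x - t n) - f x| ≤ 2 * ∑' j, aa s j) ∧
    2 * π * (2:ℝ)^(-(n:ℝ)*s) ≤ ∫ x in (0:ℝ)..(2*π), |f (x - t n) - f x| := by
  set m := n - 3 with hm
  set N : ℕ := 11 * 2 ^ m with hN
  set c : ℕ → ℝ := fun j => ((11 * 2 ^ j : ℕ) : ℝ) with hcdef
  set φ : ℕ → ℝ := fun j => -(c j * t n) with hφdef
  have hc : ∀ j, c j = 11 * 2 ^ j := fun j => by push_cast [hcdef]; ring
  have hf' : ∀ x, f x = ∑' j, aa s j * Real.cos (c j * x) := by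
    intro x
    rw [hf x]
    congr 1
    funext j
    rw [aa]
    congr 2
    rw [hc j, pow_add]
    ring
  have hsb : ∀ (u : ℕ → ℝ), Summable (fun j => aa s j * Real.cos (u j)) := by
    intro u
    refine Summable.of_norm_bounded (aa_summable s hs) fun j => ?_
    rw [norm_mul, Real.norm_eq_abs, Real.norm_eq_abs, abs_of_pos (aa_pos s j)]
    nlinarith [Real.abs_cos_le_one (u j), aa_pos s j, abs_nonneg (Real.cos (u j))]
  have hgx : ∀ x, f (x - t n) - f x
      = ∑' j, aa s j * (Real.cos (c j * x + φ j) - Real.cos (c j * x)) := by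
    intro x
    rw [hf' (x - t n), hf' x, ← Summable.tsum_sub (hsb _) (hsb _)]
    congr 1
    funext j
    have h1 : c j * (x - t n) = c j * x + φ j := by rw [hφdef]; ring
    rw [h1, mul_sub]
  have hterm : ∀ (x : ℝ) (j : ℕ),
      ‖aa s j * (Real.cos (c j * x + φ j) - Real.cos (c j * x))‖ ≤ 2 * aa s j := by
    intro x j
    rw [norm_mul, Real.norm_eq_abs, Real.norm_eq_abs, abs_of_pos (aa_pos s j)]
    have h1 : |Real.cos (c j * x + φ j) - Real.cos (c j * x)| ≤ 2 := by
      have h2 := abs_sub (Real.cos (c j * x + φ j)) (Real.cos (c j * x))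
      have h3 := Real.abs_cos_le_one (c j * x + φ j)
      have h4 := Real.abs_cos_le_one (c j * x)
      linarith
    nlinarith [aa_pos s j, abs_nonneg (Real.cos (c j * x + φ j) - Real.cos (c j * x))]
  have hcont : Continuous f := by
    have h := continuous_tsum (f := fun j (x:ℝ) => aa s j * Real.cos (c j * x))
      (fun j => by fun_prop) (aa_summable s hs) ?_
    · exact h.congr fun x => (hf' x).symm
    · intro j x
      rw [norm_mul, Real.norm_eq_abs, Real.norm_eq_abs, abs_of_pos (aa_pos s j)]
      nlinarith [Real.abs_cos_le_one (c j * x), aa_pos s j, abs_nonneg (Real.cos (c j * x))]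
  have hbd : ∀ x, |f (x - t n) - f x| ≤ 2 * ∑' j, aa s j := by
    intro x
    rw [hgx x]
    have hsum' : Summable fun j => ‖aa s j * (Real.cos (c j * x + φ j) - Real.cos (c j * x))‖ :=
      Summable.of_nonneg_of_le (fun j => norm_nonneg _) (fun j => hterm x j)
        ((aa_summable s hs).mul_left 2)
    calc |∑' j, aa s j * (Real.cos (c j * x + φ j) - Real.cos (c j * x))|
        ≤ ∑' j, ‖aa s j * (Real.cos (c j * x + φ j) - Real.cos (c j * x))‖ :=
          norm_tsum_le_tsum_norm hsum'
      _ ≤ ∑' j, 2 * aa s j :=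
          Summable.tsum_le_tsum (fun j => hterm x j) hsum' ((aa_summable s hs).mul_left 2)
      _ = 2 * ∑' j, aa s j := by rw [tsum_mul_left]
  refine ⟨hcont, hbd, ?_⟩
  have hn3 : n = m + 3 := by omega
  have hπ : (0:ℝ) < π := Real.pi_pos
  set F : ℕ → C(ℝ, ℝ) := fun j =>
    ⟨fun x => aa s j * ((Real.cos (c j * x + φ j) - Real.cos (c j * x)) * Real.cos ((N:ℝ) * x)),
     by fun_prop⟩ with hFdef
  have hFnorm : ∀ j, ‖(F j).restrict
      (⟨Set.uIcc (0:ℝ) (2*π), isCompact_uIcc⟩ : TopologicalSpace.Compacts ℝ)‖ ≤ 2 * aa s j := by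
    intro j
    rw [ContinuousMap.norm_le _ (by linarith [aa_pos s j])]
    rintro ⟨x, hx⟩
    rw [ContinuousMap.restrict_apply]
    show ‖aa s j * ((Real.cos (c j * x + φ j) - Real.cos (c j * x)) * Real.cos ((N:ℝ) * x))‖
      ≤ 2 * aa s j
    rw [← mul_assoc, norm_mul]
    calc ‖aa s j * (Real.cos (c j * x + φ j) - Real.cos (c j * x))‖ * ‖Real.cos ((N:ℝ)*x)‖
        ≤ (2 * aa s j) * 1 := by
          refine mul_le_mul (hterm x j) ?_ (norm_nonneg _) (by linarith [aa_pos s j])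
          rw [Real.norm_eq_abs]; exact Real.abs_cos_le_one _
      _ = 2 * aa s j := mul_one _
  have hFsum : Summable fun j => ‖(F j).restrict
      (⟨Set.uIcc (0:ℝ) (2*π), isCompact_uIcc⟩ : TopologicalSpace.Compacts ℝ)‖ :=
    Summable.of_nonneg_of_le (fun j => norm_nonneg _) hFnorm ((aa_summable s hs).mul_left 2)
  have hswap := intervalIntegral.tsum_intervalIntegral_eq_of_summable_norm
    (a := 0) (b := 2*π) hFsum
  have hsum_pt : ∀ x : ℝ, ∑' j, F j x = (f (x - t n) - f x) * Real.cos ((N:ℝ)*x) := by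
    intro x
    rw [hgx x, ← tsum_mul_right]
    congr 1
    funext j
    show aa s j * ((Real.cos (c j * x + φ j) - Real.cos (c j * x)) * Real.cos ((N:ℝ) * x)) = _
    ring
  have hIj : ∀ j, (∫ x in (0:ℝ)..(2*π), F j x) = if j = m then -(2*π) * aa s m else 0 := by
    intro j
    have e : ∀ x : ℝ, F j x
        = aa s j * (Real.cos (((11*2^j : ℕ):ℝ) * x + φ j) * Real.cos ((N:ℝ)*x))
          - aa s j * (Real.cos (((11*2^j : ℕ):ℝ) * x + 0) * Real.cos ((N:ℝ)*x)) := by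
      intro x
      show aa s j * ((Real.cos (c j * x + φ j) - Real.cos (c j * x)) * Real.cos ((N:ℝ) * x)) = _
      rw [hcdef]
      push_cast
      ring_nf
    rw [intervalIntegral.integral_congr (fun x _ => e x)]
    rw [intervalIntegral.integral_sub
      ((Continuous.intervalIntegrable (by fun_prop) _ _))
      ((Continuous.intervalIntegrable (by fun_prop) _ _)),
      intervalIntegral.integral_const_mul, intervalIntegral.integral_const_mul,
      cos_prod _ _ (by positivity) (by rw [hN]; positivity) (φ j),
      cos_prod _ _ (by positivity) (by rw [hN]; positivity) 0]
    have hjm : (11 * 2 ^ j = N) ↔ j = m := by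
      rw [hN]
      constructor
      · intro h
        have h2 : (2:ℕ)^j = 2^m := by omega
        exact Nat.pow_right_injective (le_refl 2) h2
      · rintro rfl; rfl
    by_cases hjm' : j = m
    · subst hjm'
      rw [if_pos (hjm.mpr rfl), if_pos (hjm.mpr rfl), if_pos rfl]
      have hφm : φ m = -π := by
        rw [hφdef]
        simp only
        rw [hc m, ht n]
        have h2n : (2:ℝ)^n = 2^m * 8 := by rw [hn3, pow_add]; norm_num
        rw [h2n]
        field_simp
      rw [hφm, Real.cos_neg, Real.cos_pi, Real.cos_zero]
      ring
    · rw [if_neg (fun h => hjm' (hjm.mp h)), if_neg (fun h => hjm' (hjm.mp h)), if_neg hjm']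
      ring
  have hInt : ∫ x in (0:ℝ)..(2*π), (f (x - t n) - f x) * Real.cos ((N:ℝ)*x)
      = -(2*π) * aa s m := by
    rw [← intervalIntegral.integral_congr (fun x _ => hsum_pt x), ← hswap]
    rw [tsum_congr hIj]
    exact tsum_ite_eq m _
  have ham : aa s m = (2:ℝ)^(-(n:ℝ)*s) := by
    rw [aa]
    congr 1
    rw [hn3]
    push_cast
    ring
  have hglecont : Continuous fun x => f (x - t n) - f x :=
    (hcont.comp (by fun_prop)).sub hcont
  calc 2 * π * (2:ℝ)^(-(n:ℝ)*s)
      = |∫ x in (0:ℝ)..(2*π), (f (x - t n) - f x) * Real.cos ((N:ℝ)*x)| := by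
        rw [hInt, ham, abs_mul, abs_neg, abs_of_nonneg (by positivity : (0:ℝ) ≤ 2*π),
          abs_of_nonneg (by positivity : (0:ℝ) ≤ (2:ℝ)^(-(n:ℝ)*s))]
    _ ≤ ∫ x in (0:ℝ)..(2*π), |(f (x - t n) - f x) * Real.cos ((N:ℝ)*x)| :=
        intervalIntegral.abs_integral_le_integral_abs (by linarith [Real.pi_pos])
    _ ≤ ∫ x in (0:ℝ)..(2*π), |f (x - t n) - f x| := by
        refine intervalIntegral.integral_mono_on (by linarith [Real.pi_pos])
          ((Continuous.intervalIntegrable (by fun_prop) _ _))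
          ((Continuous.intervalIntegrable (hglecont.abs) _ _)) (fun x _ => ?_)
        rw [abs_mul]
        nlinarith [Real.abs_cos_le_one ((N:ℝ)*x), abs_nonneg (f (x - t n) - f x),
          abs_nonneg (Real.cos ((N:ℝ)*x))]

theorem stmt_8 (s : ℝ) (hs : 0 < s) (f : ℝ → ℝ)
    (hf : ∀ x : ℝ, f x = ∑' j : ℕ,
      (2 : ℝ) ^ (-(((j : ℝ) + 3)) * s) * Real.cos ((11 / 8) * 2 ^ (j + 3) * x))
    (t : ℕ → ℝ) (ht : ∀ n, t n = 8 * π / (11 * 2 ^ n)) :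
    (∀ p : ℝ, 1 ≤ p → ∀ n : ℕ, 3 ≤ n →
      (2 : ℝ) ^ ((n : ℝ) * s)
          * (∫ x in (0:ℝ)..(2 * π), |f (x - t n) - f x| ^ p) ^ (1 / p)
        ≥ (2 * π) ^ (1 / p)) ∧
    (∀ n : ℕ, 3 ≤ n →
      (2 : ℝ) ^ ((n : ℝ) * s) * (⨆ x : ℝ, |f (x - t n) - f x|) ≥ 1) ∧
    Tendsto t atTop (nhdsWithin 0 (Set.Ioi 0)) ∧
    (∀ p : ℝ, 1 ≤ p →
      ¬ Tendsto (fun n : ℕ =>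
          (2 : ℝ) ^ ((n : ℝ) * s)
            * (∫ x in (0:ℝ)..(2 * π), |f (x - t n) - f x| ^ p) ^ (1 / p))
        atTop (nhds 0)) := by
  have h2π : (0:ℝ) < 2*π := by linarith [Real.pi_pos]
  have hcont : Continuous f := (key s hs f hf t ht 3 le_rfl).1
  -- Part 1
  have part1 : ∀ p : ℝ, 1 ≤ p → ∀ n : ℕ, 3 ≤ n →
      (2 : ℝ) ^ ((n : ℝ) * s)
          * (∫ x in (0:ℝ)..(2 * π), |f (x - t n) - f x| ^ p) ^ (1 / p)
        ≥ (2 * π) ^ (1 / p) := by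
    intro p hp n hn
    obtain ⟨-, hbd, hlow⟩ := key s hs f hf t ht n hn
    have hgcont : Continuous fun x => f (x - t n) - f x :=
      (hcont.comp (by fun_prop)).sub hcont
    have hH := holder_simple _ hgcont _ hbd p hp
    have hchain : 2*π * (2:ℝ)^(-(n:ℝ)*s)
        ≤ (∫ x in (0:ℝ)..(2*π), |f (x - t n) - f x| ^ p) ^ (1/p) * (2*π)^(1-1/p) :=
      le_trans hlow hH
    have hB : (0:ℝ) < (2:ℝ)^((n:ℝ)*s) := Real.rpow_pos_of_pos (by norm_num) _
    have hD : (0:ℝ) < (2*π)^(1-1/p) := Real.rpow_pos_of_pos h2π _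
    have hmul2 : (2:ℝ)^((n:ℝ)*s) * (2:ℝ)^(-(n:ℝ)*s) = 1 := by
      rw [← Real.rpow_add (by norm_num)]
      simp
    have step : 2*π ≤ (2:ℝ)^((n:ℝ)*s)
        * ((∫ x in (0:ℝ)..(2*π), |f (x - t n) - f x| ^ p) ^ (1/p)) * (2*π)^(1-1/p) := by
      have := mul_le_mul_of_nonneg_left hchain hB.le
      calc 2*π = (2:ℝ)^((n:ℝ)*s) * (2*π * (2:ℝ)^(-(n:ℝ)*s)) := by
            rw [show (2:ℝ)^((n:ℝ)*s) * (2*π * (2:ℝ)^(-(n:ℝ)*s))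
              = ((2:ℝ)^((n:ℝ)*s) * (2:ℝ)^(-(n:ℝ)*s)) * (2*π) by ring, hmul2]; ring
        _ ≤ _ := by linarith [this]
      
    rw [ge_iff_le]
    refine le_of_mul_le_mul_right ?_ hD
    calc (2*π)^(1/p) * (2*π)^(1-1/p) = 2*π := by
          rw [← Real.rpow_add h2π]; norm_num
      _ ≤ _ := step
  refine ⟨part1, ?_, ?_, ?_⟩
  -- Part 2 : sup bound
  · intro n hn
    obtain ⟨-, hbd, hlow⟩ := key s hs f hf t ht n hn
    set M := ⨆ x : ℝ, |f (x - t n) - f x| with hM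
    have hbdd : BddAbove (Set.range fun x : ℝ => |f (x - t n) - f x|) :=
      ⟨2 * ∑' j, aa s j, by rintro _ ⟨x, rfl⟩; exact hbd x⟩
    have hMx : ∀ x, |f (x - t n) - f x| ≤ M := fun x => le_ciSup hbdd x
    have hgcont : Continuous fun x => f (x - t n) - f x :=
      (hcont.comp (by fun_prop)).sub hcont
    have hIM : ∫ x in (0:ℝ)..(2*π), |f (x - t n) - f x| ≤ 2*π*M := by
      have := intervalIntegral.integral_mono_on (by linarith : (0:ℝ) ≤ 2*π)
        (Continuous.intervalIntegrable hgcont.abs _ _)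
        (_root_.intervalIntegrable_const (μ := volume) (c := M)) (fun x _ => hMx x)
      rwa [intervalIntegral.integral_const, smul_eq_mul, sub_zero] at this
    have h1 : (2:ℝ)^(-(n:ℝ)*s) ≤ M := by
      have := le_trans hlow hIM
      nlinarith
    have hB : (0:ℝ) < (2:ℝ)^((n:ℝ)*s) := Real.rpow_pos_of_pos (by norm_num) _
    have hmul2 : (2:ℝ)^((n:ℝ)*s) * (2:ℝ)^(-(n:ℝ)*s) = 1 := by
      rw [← Real.rpow_add (by norm_num)]
      simp
    calc (1:ℝ) = (2:ℝ)^((n:ℝ)*s) * (2:ℝ)^(-(n:ℝ)*s) := hmul2.symm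
      _ ≤ (2:ℝ)^((n:ℝ)*s) * M := mul_le_mul_of_nonneg_left h1 hB.le
  -- Part 3 : t → 0⁺
  · rw [tendsto_nhdsWithin_iff]
    constructor
    · have h : Tendsto (fun n : ℕ => (8*π/11) * (1/2:ℝ)^n) atTop (nhds 0) := by
        have := (tendsto_pow_atTop_nhds_zero_of_lt_one
          (by norm_num : (0:ℝ) ≤ 1/2) (by norm_num : (1/2:ℝ) < 1)).const_mul (8*π/11)
        simpa using this
      refine h.congr fun n => ?_
      rw [ht n, div_pow, one_pow]
      ring
    · refine Eventually.of_forall fun n => ?_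
      rw [ht n, Set.mem_Ioi]
      positivity
  -- Part 4 : no convergence to 0
  · intro p hp hT
    have hone : (1:ℝ) ≤ (2*π)^(1/p) := by
      calc (1:ℝ) = (1:ℝ)^(1/p) := (Real.one_rpow _).symm
        _ ≤ (2*π)^(1/p) :=
          Real.rpow_le_rpow zero_le_one (by linarith [Real.pi_gt_three]) (by positivity)
    have h1 : ∀ᶠ n : ℕ in atTop,
        (2 : ℝ) ^ ((n : ℝ) * s)
          * (∫ x in (0:ℝ)..(2 * π), |f (x - t n) - f x| ^ p) ^ (1 / p) < 1 :=
      hT (Iio_mem_nhds one_pos)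
    have h2 : ∀ᶠ n : ℕ in atTop, 3 ≤ n := eventually_ge_atTop 3
    obtain ⟨n, hn1, hn2⟩ := (h1.and h2).exists
    have := part1 p hp n hn2
    linarith
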